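/- Let (p_k, q_k), k ∈ ℕ, be the integers determined by p_k + q_k·√10 = (3 + √10)^(k+1), and set d_k := (p_{2k} − 3)/2 and m_k := (q_{2k} − 1)/2. Then for every odd k ≥ 1 one has d_k = p_{k−1}·p_k and m_k = p_{k−1}·q_k; equivalently, p_{2k} = 2·p_{k−1}·p_k + 3 and q_{2k} = 2·p_{k−1}·q_k + 1. -/

import Mathlib

private lemma irr10 : Irrational (Real.sqrt 10) := by
  rw [show ((10:ℝ) = ((10:ℕ):ℝ)) by norm_num]
  rw [irrational_sqrt_natCast_iff]
  rintro ⟨r, hr⟩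
  have h4 : r < 4 := by nlinarith
  interval_cases r <;> omega

private lemma uniq10 (a b c e : ℤ) (h : (a:ℝ) + b * Real.sqrt 10 = c + e * Real.sqrt 10) :
    a = c ∧ b = e := by
  by_cases hbe : b = e
  · subst hbe
    exact ⟨by exact_mod_cast (by linarith : (a:ℝ) = c), rfl⟩
  · exfalso
    have hne : (e - b : ℤ) ≠ 0 := by omega
    have := Irrational.ne_int (Irrational.intCast_mul irr10 hne) (a - c)
    apply this
    push_cast
    linarith

private def PQ : ℕ → ℤ × ℤ
  | 0 => (3, 1)
  | n + 1 => (3 * (PQ n).1 + 10 * (PQ n).2, (PQ n).1 + 3 * (PQ n).2)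

private lemma sq10 : Real.sqrt 10 ^ 2 = 10 := Real.sq_sqrt (by norm_num)

private lemma PQ_pow : ∀ n : ℕ,
    ((PQ n).1 : ℝ) + ((PQ n).2 : ℝ) * Real.sqrt 10 = (3 + Real.sqrt 10) ^ (n + 1)
  | 0 => by simp [PQ]
  | n + 1 => by
    have ih := PQ_pow n
    rw [pow_succ, ← ih]
    simp only [PQ]
    push_cast
    linear_combination (-((PQ n).2 : ℝ)) * sq10

private lemma norm10 : ∀ n : ℕ, (PQ n).1 ^ 2 - 10 * (PQ n).2 ^ 2 = (-1) ^ (n + 1)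
  | 0 => by simp [PQ]
  | n + 1 => by
    have ih := norm10 n
    simp only [PQ, pow_succ]
    ring_nf
    ring_nf at ih
    linarith

/-- Let `(p k, q k)` be determined by `p k + q k·√10 = (3 + √10)^(k+1)`, and let
`d k = (p (2k) − 3)/2` and `m k = (q (2k) − 1)/2`. Then for every odd `k ≥ 1` one has
`d k = p (k−1)·p k` and `m k = p (k−1)·q k`; equivalently, `p (2k) = 2·p (k−1)·p k + 3`
and `q (2k) = 2·p (k−1)·q k + 1`. -/
theorem stmt_11 (p q d m : ℕ → ℤ)
    (hpq : ∀ k : ℕ,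
      (p k : ℝ) + (q k : ℝ) * Real.sqrt 10 = (3 + Real.sqrt 10) ^ (k + 1))
    (hd : ∀ k : ℕ, p (2 * k) = 2 * d k + 3)
    (hm : ∀ k : ℕ, q (2 * k) = 2 * m k + 1) :
    ∀ k : ℕ, Odd k → 1 ≤ k →
      d k = p (k - 1) * p k ∧ m k = p (k - 1) * q k ∧
      p (2 * k) = 2 * p (k - 1) * p k + 3 ∧ q (2 * k) = 2 * p (k - 1) * q k + 1 := by
  have hP : ∀ n, p n = (PQ n).1 ∧ q n = (PQ n).2 := fun n =>
    uniq10 _ _ _ _ ((hpq n).trans (PQ_pow n).symm)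
  intro k hk hk1
  obtain ⟨n, rfl⟩ : ∃ n, k = n + 1 := ⟨k - 1, by omega⟩
  have hnorm := norm10 n
  have hodd : (-1 : ℤ) ^ (n + 1) = -1 := by
    obtain ⟨j, hj⟩ := hk
    have hn : n = 2 * j := by omega
    subst hn
    rw [pow_succ, pow_mul]
    norm_num
  rw [hodd] at hnorm
  have key : (PQ (2 * (n + 1))).1 = (PQ n).1 * (PQ (n+1)).1 + 10 * (PQ n).2 * (PQ (n+1)).2 ∧
      (PQ (2 * (n + 1))).2 = (PQ n).1 * (PQ (n+1)).2 + (PQ n).2 * (PQ (n+1)).1 := by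
    apply uniq10
    rw [PQ_pow]
    have h1 := PQ_pow n
    have h2 := PQ_pow (n + 1)
    have hsplit : (3 + Real.sqrt 10) ^ (2 * (n + 1) + 1) =
        (3 + Real.sqrt 10) ^ (n + 1) * (3 + Real.sqrt 10) ^ (n + 2) := by
      rw [← pow_add]; ring_nf
    rw [hsplit, ← h1, ← h2]
    push_cast
    linear_combination (((PQ n).2 : ℝ) * ((PQ (n+1)).2 : ℝ)) * sq10
  obtain ⟨k1, k2⟩ := key
  have e1 := (hP (2 * (n + 1))).1
  have e2 := (hP (2 * (n + 1))).2
  have e3 := (hP n).1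
  have e5 := (hP (n + 1)).1
  have e6 := (hP (n + 1)).2
  have hPs : (PQ (n + 1)).1 = 3 * (PQ n).1 + 10 * (PQ n).2 := rfl
  have hQs : (PQ (n + 1)).2 = (PQ n).1 + 3 * (PQ n).2 := rfl
  have hdk := hd (n + 1)
  have hmk := hm (n + 1)
  simp only [Nat.add_sub_cancel]
  have h1 : p (2 * (n + 1)) = 2 * (PQ n).1 * (PQ (n + 1)).1 + 3 := by
    rw [e1, k1]; linear_combination 10*(PQ n).2*hQs - (PQ n).1*hPs - 3*hnorm
  have h2 : q (2 * (n + 1)) = 2 * (PQ n).1 * (PQ (n + 1)).2 + 1 := by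
    rw [e2, k2]; linear_combination (PQ n).2*hPs - (PQ n).1*hQs - hnorm
  rw [e3, e5, e6]
  exact ⟨by linarith [hdk, h1], by linarith [hmk, h2], by linarith [h1], by linarith [h2]⟩
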